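/- Let n ≥ 1 and d_1,…,d_n ≥ 1 be integers, let V = {(j,i) : 1 ≤ j ≤ n, 1 ≤ i ≤ d_j}, and let S = ℂ[X_v : v ∈ V] be the polynomial ring over ℂ. Then a multihomogeneous ideal I ⊆ S equals the vanishing ideal of the set Z(I) ∖ (A_1 ∪ ⋯ ∪ A_n) if and only if I is radical and (I : 𝔐_j) = I for every j ∈ [1,n]. -/

import Mathlib

open MvPolynomial

/-- The `m`-multihomogeneous component of a polynomial in the variables
`X_{(j,i)}`, `j ∈ Fin n`, `i ∈ Fin (d j)`: the sum of the terms whose total degree in the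
`j`-th group of variables equals `m j` for every `j`. -/
noncomputable def mhComponent {n : ℕ} {d : Fin n → ℕ} (m : Fin n → ℕ)
    (p : MvPolynomial (Σ j : Fin n, Fin (d j)) ℂ) :
    MvPolynomial (Σ j : Fin n, Fin (d j)) ℂ :=
  ∑ s ∈ p.support.filter
      (fun s => ∀ j : Fin n, (∑ i : Fin (d j), s ⟨j, i⟩) = m j),
    monomial s (coeff s p)

/-- Multiprojective Nullstellensatz: a multihomogeneous ideal `I` in
`ℂ[X_v : v ∈ V]`, `V = {(j,i) : 1 ≤ j ≤ n, 1 ≤ i ≤ d_j}`, equals the vanishing ideal of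
`Z(I) ∖ (A_1 ∪ ⋯ ∪ A_n)` if and only if `I` is radical and `(I : 𝔐_j) = I` for all `j`. -/
theorem stmt2 {n : ℕ} (hn : 1 ≤ n) (d : Fin n → ℕ) (hd : ∀ j, 1 ≤ d j)
    (I : Ideal (MvPolynomial (Σ j : Fin n, Fin (d j)) ℂ))
    (hmh : ∀ p ∈ I, ∀ m : Fin n → ℕ, mhComponent m p ∈ I) :
    (∀ p : MvPolynomial (Σ j : Fin n, Fin (d j)) ℂ,
        p ∈ I ↔ ∀ x : (Σ j : Fin n, Fin (d j)) → ℂ,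
          x ∈ ({x | ∀ q ∈ I, eval x q = 0} \
                ⋃ j : Fin n, {x | ∀ i : Fin (d j), x ⟨j, i⟩ = 0}) →
            eval x p = 0)
    ↔ (I.radical = I ∧ ∀ j : Fin n,
        Submodule.colon I
          (Ideal.span (Set.range
            (fun i : Fin (d j) => (X ⟨j, i⟩ : MvPolynomial (Σ j : Fin n, Fin (d j)) ℂ)))) = I) := by
  constructor
  · intro hI
    constructor
    · -- I is radical
      refine le_antisymm ?_ Ideal.le_radical
      intro p hp
      obtain ⟨k, hk⟩ := hp
      rw [hI] at hk ⊢
      intro x hx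
      have := hk x hx
      rw [map_pow] at this
      rcases Nat.eq_zero_or_pos k with hk0 | hk0
      · simp [hk0] at this
      · exact pow_eq_zero_iff hk0.ne' |>.mp this
    · -- saturation
      intro j
      refine le_antisymm ?_ ?_
      · intro s hs
        rw [hI]
        rintro x ⟨hx1, hx2⟩
        rw [Set.mem_iUnion] at hx2
        push_neg at hx2
        obtain ⟨i, hi⟩ : ∃ i : Fin (d j), x ⟨j, i⟩ ≠ 0 := by
          by_contra h
          push_neg at h
          exact hx2 j h
        have hmem : s * X ⟨j, i⟩ ∈ I := by
          have := Submodule.mem_colon.mp hs (X ⟨j, i⟩)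
            (Ideal.subset_span ⟨i, rfl⟩)
          simpa [smul_eq_mul] using this
        have := (hI _).mp hmem x ⟨hx1, by rw [Set.mem_iUnion]; push_neg; exact hx2⟩
        rw [map_mul, eval_X] at this
        exact (mul_eq_zero.mp this).resolve_right hi
      · intro s hs
        rw [Submodule.mem_colon]
        intro q hq
        rw [smul_eq_mul]
        exact I.mul_mem_right q hs
  · rintro ⟨hrad, hsat⟩ p
    constructor
    · intro hp x hx
      exact hx.1 p hp
    · intro hp
      -- key: for every choice f, p * ∏_j X⟨j, f j⟩ ∈ I
      have key : ∀ f : (j : Fin n) → Fin (d j),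
          p * ∏ j : Fin n, X (⟨j, f j⟩ : Σ j : Fin n, Fin (d j)) ∈ I := by
        intro f
        have : p * ∏ j : Fin n, X (⟨j, f j⟩ : Σ j : Fin n, Fin (d j)) ∈
            vanishingIdeal ℂ (zeroLocus ℂ I) := by
          rw [mem_vanishingIdeal_iff]
          intro x hx
          simp only [mem_zeroLocus_iff, aeval_eq_eval] at hx ⊢
          rw [map_mul, map_prod]
          by_cases hA : x ∈ ⋃ j : Fin n, {x : (Σ j : Fin n, Fin (d j)) → ℂ |
              ∀ i : Fin (d j), x ⟨j, i⟩ = 0}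
          · rw [Set.mem_iUnion] at hA
            obtain ⟨j, hj⟩ := hA
            have : eval x (X (⟨j, f j⟩ : Σ j : Fin n, Fin (d j))) = 0 := by
              rw [eval_X]; exact hj (f j)
            rw [Finset.prod_eq_zero (Finset.mem_univ j) this, mul_zero]
          · rw [hp x ⟨hx, hA⟩, zero_mul]
        rwa [vanishingIdeal_zeroLocus_eq_radical, hrad] at this
      -- descend: remove variables one by one using saturation
      have claim : ∀ k : ℕ,
          (∀ f : (j : Fin n) → Fin (d j),
            p * ∏ j ∈ Finset.univ.filter (fun j : Fin n => j.val < k),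
              X (⟨j, f j⟩ : Σ j : Fin n, Fin (d j)) ∈ I) → p ∈ I := by
        intro k
        induction k with
        | zero =>
          intro H
          have := H (fun j => ⟨0, hd j⟩)
          simpa using this
        | succ k ih =>
          intro H
          apply ih
          intro f
          by_cases hk : k < n
          · set j0 : Fin n := ⟨k, hk⟩ with hj0
            set s : MvPolynomial (Σ j : Fin n, Fin (d j)) ℂ :=
              p * ∏ j ∈ Finset.univ.filter (fun j : Fin n => j.val < k),
                X (⟨j, f j⟩ : Σ j : Fin n, Fin (d j)) with hsdef
            have hsplit : ∀ i : Fin (d j0),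
                s * X (⟨j0, i⟩ : Σ j : Fin n, Fin (d j)) ∈ I := by
              intro i
              have hins : Finset.univ.filter (fun j : Fin n => j.val < k + 1)
                  = insert j0 (Finset.univ.filter (fun j : Fin n => j.val < k)) := by
                ext j
                simp only [Finset.mem_filter, Finset.mem_univ, true_and, Finset.mem_insert]
                constructor
                · intro hj
                  rcases Nat.lt_succ_iff_lt_or_eq.mp hj with h | h
                  · exact Or.inr h
                  · exact Or.inl (Fin.ext h)
                · rintro (h | h)
                  · rw [h]; exact Nat.lt_succ_self k
                  · exact Nat.lt_succ_of_lt h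
              have hnotmem : j0 ∉ Finset.univ.filter (fun j : Fin n => j.val < k) := by
                simp [hj0]
              have := H (Function.update f j0 i)
              rw [hins, Finset.prod_insert hnotmem, Function.update_self] at this
              have hprod : ∏ j ∈ Finset.univ.filter (fun j : Fin n => j.val < k),
                  (X (⟨j, Function.update f j0 i j⟩ : Σ j : Fin n, Fin (d j)) :
                    MvPolynomial (Σ j : Fin n, Fin (d j)) ℂ)
                  = ∏ j ∈ Finset.univ.filter (fun j : Fin n => j.val < k),
                  X (⟨j, f j⟩ : Σ j : Fin n, Fin (d j)) := by
                apply Finset.prod_congr rfl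
                intro j hj
                have hne : j ≠ j0 := by
                  intro h
                  exact hnotmem (h ▸ hj)
                rw [Function.update_of_ne hne]
              rw [hprod] at this
              convert this using 1
              rw [hsdef]
              ring
            -- s ∈ colon I 𝔐_{j0} = I
            rw [← hsat j0]
            rw [Submodule.mem_colon]
            intro q hq
            rw [smul_eq_mul, mul_comm]
            refine Submodule.span_induction ?_ ?_ ?_ ?_ hq
            · rintro y ⟨i, rfl⟩
              show X (⟨j0, i⟩ : Σ j : Fin n, Fin (d j)) * s ∈ I
              rw [mul_comm]
              exact hsplit i
            · simp
            · intro a b _ _ ha hb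
              rw [add_mul]
              exact I.add_mem ha hb
            · intro c y _ hy
              rw [smul_eq_mul, mul_assoc]
              exact I.mul_mem_left c hy
          · have heq : Finset.univ.filter (fun j : Fin n => j.val < k)
                = Finset.univ.filter (fun j : Fin n => j.val < k + 1) := by
              ext j
              simp only [Finset.mem_filter, Finset.mem_univ, true_and]
              constructor
              · exact Nat.lt_succ_of_lt
              · intro _
                exact lt_of_lt_of_le j.isLt (le_of_not_gt hk)
            rw [heq]
            exact H f
      apply claim n
      intro f
      have : Finset.univ.filter (fun j : Fin n => j.val < n) = Finset.univ := by
        ext j; simp [j.isLt]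
      rw [this]
      exact key f
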